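/- For every x and every f(x) ∈ ℕ with f(x) ≤ F_n(x+2) for some fixed n, we have ω·f(x) <_{F_n(x+2)} ω^ω, and consequently ω_{x+2} + ω_x^{ω·f(x)} <_{F_n(x+2)} ω_{x+2}·2, where ω_x^α is defined by ω_0^α = α, ω_{k+1}^α = ω^{ω_k^α}. -/

import Mathlib

namespace SlowCon

open ONote

/-- Fast-growing hierarchy with `F_{α+1}(n) = F_α^[n+1](n)`, standard fundamental sequences. -/
def F : ONote → ℕ → ℕ
  | o =>
    match fundamentalSequence o, fundamentalSequence_has_prop o with
    | Sum.inl none, _ => fun n => n + 1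
    | Sum.inl (some a), h =>
      have : a < o := by rw [ONote.lt_def, h.1]; exact Order.lt_succ _
      fun n => (F a)^[n + 1] n
    | Sum.inr f, h => fun n =>
      have : f n < o := (h.2.1 n).2.1
      F (f n) n
  termination_by o => o

/-- The `k`-th member of the fundamental sequence (predecessor at successors, `0` at `0`). -/
def fs (o : ONote) (k : ℕ) : ONote :=
  match fundamentalSequence o with
  | Sum.inl none => 0
  | Sum.inl (some a) => a
  | Sum.inr f => f k

/-- `stepDown k a b` : one can descend from `b` to `a` via `k`-th members of
fundamental sequences (at least one step). -/
def stepDown (k : ℕ) (a b : ONote) : Prop :=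
  Relation.TransGen (fun x y => y ≠ 0 ∧ x = fs y k) a b

/-- Tower of ω's: `wtower 0 = 1`, `wtower (n+1) = ω ^ wtower n`. -/
def wtower : ℕ → ONote
  | 0 => 1
  | n + 1 => ONote.oadd (wtower n) 1 0

/-- `F_{ε₀}(n) := F_{ω_{n+1}}(n)`. -/
def Feps (n : ℕ) : ℕ := F (wtower (n + 1)) n

/-- Ordinals `≤ ε₀`: `none` stands for `ε₀`, `some a` for `a < ε₀`. -/
def fsE : Option ONote → ℕ → Option ONote
  | none, k => some (wtower (k + 1))
  | some a, k => some (fs a k)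

/-- Step-down relation on ordinals `≤ ε₀` (with `{ε₀}(k) = ω_{k+1}`). -/
def stepDownE (k : ℕ) (a b : Option ONote) : Prop :=
  Relation.TransGen (fun x y => y ≠ some 0 ∧ x = fsE y k) a b

/-- Fast-growing hierarchy at indices `≤ ε₀`. -/
def FE : Option ONote → ℕ → ℕ
  | none, n => Feps n
  | some a, n => F a n

/-- Normal form for indices `≤ ε₀`. -/
def NFE : Option ONote → Prop
  | none => True
  | some a => a.NF

end SlowCon

namespace SlowCon

open ONote

/-- `iterRel G j x y` : `y` is obtained from `x` by `j` applications of the graph `G`. -/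
def iterRel (G : ℕ → ℕ → Prop) : ℕ → ℕ → ℕ → Prop
  | 0, x, y => y = x
  | j + 1, x, y => ∃ z, iterRel G j x z ∧ G z y

/-- Graph relation of the fast-growing hierarchy: `FRel α x y` means `F_α(x) = y`. -/
def FRel : ONote → ℕ → ℕ → Prop
  | o =>
    match fundamentalSequence o, fundamentalSequence_has_prop o with
    | Sum.inl none, _ => fun x y => y = x + 1
    | Sum.inl (some a), h =>
      have : a < o := by rw [ONote.lt_def, h.1]; exact Order.lt_succ _
      fun x y => iterRel (FRel a) (x + 1) x y
    | Sum.inr f, h => fun x y =>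
      have : f x < o := (h.2.1 x).2.1
      FRel (f x) x y
  termination_by o => o

/-- Graph relation for indices `≤ ε₀`, with `F_{ε₀}(x) = F_{ω_{x+1}}(x)`. -/
def FRelE : Option ONote → ℕ → ℕ → Prop
  | none, x, y => FRel (wtower (x + 1)) x y
  | some a, x, y => FRel a x y

/-- `OltE a b` : `a < b` among ordinals `≤ ε₀` (`none` = `ε₀`). -/
def OltE : Option ONote → Option ONote → Prop
  | some x, some y => x < y
  | some _, none => True
  | none, _ => False

/-- Finite levels of the fast-growing hierarchy. -/
def Ffin : ℕ → ℕ → ℕ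
  | 0 => fun m => m + 1
  | k + 1 => fun m => (Ffin k)^[m + 1] m

/-- `tower x α = ω_x^α` : `x`-fold exponential tower over `α`. -/
def tower : ℕ → ONote → ONote
  | 0, a => a
  | k + 1, a => ONote.oadd (tower k a) 1 0

/-- Progressiveness of a predicate on ordinal notations below ε₀. -/
def ProgO (Q : ONote → Prop) : Prop := ∀ a : ONote, (∀ b < a, Q b) → Q a

/-- Transfinite induction up to `α` for `Q`. -/
def TIO (α : ONote) (Q : ONote → Prop) : Prop := ProgO Q → ∀ β < α, Q β

open Classical in
/-- `FepsInv x` : the largest `z ≤ x` with `F_{ε₀}(z) ≤ x`, or `0` if there is none. -/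
noncomputable def FepsInv (x : ℕ) : ℕ :=
  ((Finset.range (x + 1)).filter fun z => Feps z ≤ x).sup id

end SlowCon


namespace SlowCon

open ONote Relation

theorem oadd_ne_zero' {e : ONote} {n : ℕ+} {a : ONote} : oadd e n a ≠ 0 :=
  fun h => ONote.noConfusion h

theorem fs_of_some {b b' : ONote} (e : fundamentalSequence b = Sum.inl (some b')) (k : ℕ) :
    fs b k = b' := by unfold fs; rw [e]

theorem fs_of_inr {b : ONote} {f : ℕ → ONote} (e : fundamentalSequence b = Sum.inr f) (k : ℕ) :
    fs b k = f k := by unfold fs; rw [e]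

theorem fundSeq_ne_none {b : ONote} (hb : b ≠ 0) : fundamentalSequence b ≠ Sum.inl none := by
  intro h
  have := fundamentalSequence_has_prop b
  rw [h] at this
  exact hb this

theorem fs_oadd_tail {b : ONote} (hb : b ≠ 0) (a : ONote) (m : ℕ+) (k : ℕ) :
    fs (oadd a m b) k = oadd a m (fs b k) := by
  rcases e : fundamentalSequence b with (_|b')|f
  · exact absurd e (fundSeq_ne_none hb)
  · rw [fs_of_some e, fs_of_some (b' := oadd a m b') (by rw [fundamentalSequence, e])]
  · rw [fs_of_inr e, fs_of_inr (f := fun i => oadd a m (f i)) (by rw [fundamentalSequence, e])]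

theorem fs_lt' {b : ONote} (hb : b ≠ 0) (k : ℕ) : fs b k < b := by
  have h := fundamentalSequence_has_prop b
  rcases e : fundamentalSequence b with (_|b')|f
  · exact absurd e (fundSeq_ne_none hb)
  · rw [e] at h; rw [fs_of_some e, ONote.lt_def, h.1]; exact Order.lt_succ _
  · rw [e] at h; rw [fs_of_inr e]; exact (h.2.1 k).2.1

theorem stepDown.trans {k : ℕ} {a b c : ONote} (h1 : stepDown k a b) (h2 : stepDown k b c) :
    stepDown k a c := TransGen.trans h1 h2

theorem stepDown_fs {k : ℕ} {b : ONote} (hb : b ≠ 0) : stepDown k (fs b k) b :=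
  TransGen.single ⟨hb, rfl⟩

theorem stepDown.step {k : ℕ} {a b c : ONote} (h : stepDown k a b) (hc : c ≠ 0)
    (e : b = fs c k) : stepDown k a c := Relation.TransGen.tail h ⟨hc, e⟩

theorem stepDown_zero {k : ℕ} {b : ONote} (hb : b ≠ 0) : stepDown k 0 b := by
  have : ∀ (o : Ordinal) (b : ONote), ONote.repr b = o → b ≠ 0 → stepDown k 0 b := by
    intro o
    induction o using Ordinal.induction with
    | h o IH =>
      intro b hro hb
      rcases eq_or_ne (fs b k) 0 with h0 | h0
      · exact h0 ▸ stepDown_fs hb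
      · exact (IH (ONote.repr (fs b k)) (hro ▸ (ONote.lt_def.1 (fs_lt' hb k))) _ rfl h0).step hb rfl
  exact this _ b rfl hb

theorem stepDown_oadd {k : ℕ} {a b : ONote} (h : stepDown k a b) (e : ONote) (m : ℕ+) :
    stepDown k (oadd e m a) (oadd e m b) := by
  induction h with
  | single h1 =>
    exact TransGen.single ⟨oadd_ne_zero', by rw [fs_oadd_tail h1.1, ← h1.2]⟩
  | tail _ h1 ih =>
    exact ih.step oadd_ne_zero' (by rw [fs_oadd_tail h1.1, ← h1.2])

/-- Descend the multiplier by one. -/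
theorem stepDown_mult_step {k : ℕ} (e : ONote) (p : ℕ) :
    stepDown k (oadd e p.succPNat 0) (oadd e (p+1).succPNat 0) := by
  rcases he : fundamentalSequence e with (_|e')|f
  · have he0 : e = 0 := by
      have h := fundamentalSequence_has_prop e; rw [he] at h; exact h
    subst he0
    exact TransGen.single ⟨oadd_ne_zero',
      (fs_of_some (b' := oadd 0 p.succPNat 0) (by rw [fundamentalSequence]; rfl) k).symm⟩
  · have hfs : fs (oadd e (p+1).succPNat 0) k = oadd e p.succPNat (oadd e' k.succPNat 0) :=
      fs_of_inr (b := oadd e (p+1).succPNat 0) (f := fun i => oadd e p.succPNat (oadd e' i.succPNat 0)) (by rw [fundamentalSequence, he]; rfl) k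
    exact (stepDown_oadd (stepDown_zero oadd_ne_zero') e p.succPNat).step
      oadd_ne_zero' hfs.symm
  · have hfs : fs (oadd e (p+1).succPNat 0) k = oadd e p.succPNat (oadd (f k) 1 0) :=
      fs_of_inr (b := oadd e (p+1).succPNat 0) (f := fun i => oadd e p.succPNat (oadd (f i) 1 0)) (by rw [fundamentalSequence, he]; rfl) k
    exact (stepDown_oadd (stepDown_zero oadd_ne_zero') e p.succPNat).step
      oadd_ne_zero' hfs.symm

theorem stepDown_mult_le {k : ℕ} (e : ONote) {p q : ℕ} (h : p ≤ q) :
    p = q ∨ stepDown k (oadd e p.succPNat 0) (oadd e q.succPNat 0) := by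
  induction q with
  | zero => exact Or.inl (Nat.le_zero.1 h)
  | succ q ih =>
    rcases Nat.lt_or_ge p (q+1) with h' | h'
    · right
      rcases ih (Nat.lt_succ_iff.1 h') with rfl | hsd
      · exact stepDown_mult_step e p
      · exact hsd.trans (stepDown_mult_step e q)
    · exact Or.inl (le_antisymm h h')

/-- Single fs-step on exponents. -/
theorem stepDown_exp_step {k : ℕ} {a b : ONote} (hb : b ≠ 0) (hab : a = fs b k) :
    stepDown k (oadd a 1 0) (oadd b 1 0) := by
  rcases he : fundamentalSequence b with (_|b')|f
  · exact absurd he (fundSeq_ne_none hb)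
  · have ha : a = b' := by rw [hab, fs_of_some he]
    subst ha
    have hfs : fs (oadd b 1 0) k = oadd a k.succPNat 0 :=
      fs_of_inr (b := oadd b 1 0) (f := fun i => oadd a i.succPNat 0) (by rw [fundamentalSequence, he]; rfl) k
    rcases stepDown_mult_le (k := k) a (Nat.zero_le k) with h0 | hsd
    · subst h0
      exact TransGen.single ⟨oadd_ne_zero', hfs.symm⟩
    · exact hsd.step oadd_ne_zero' hfs.symm
  · have hfs : fs (oadd b 1 0) k = oadd (f k) 1 0 :=
      fs_of_inr (b := oadd b 1 0) (f := fun i => oadd (f i) 1 0) (by rw [fundamentalSequence, he]; rfl) k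
    refine TransGen.single ⟨oadd_ne_zero', ?_⟩
    rw [hfs, hab, fs_of_inr he]

theorem stepDown_exp {k : ℕ} {a b : ONote} (h : stepDown k a b) :
    stepDown k (oadd a 1 0) (oadd b 1 0) := by
  induction h with
  | single h1 => exact stepDown_exp_step h1.1 h1.2
  | tail _ h1 ih => exact ih.trans (stepDown_exp_step h1.1 h1.2)

theorem stepDown_tower {k : ℕ} {a b : ONote} (h : stepDown k a b) (x : ℕ) :
    stepDown k (tower x a) (tower x b) := by
  induction x with
  | zero => exact h
  | succ x ih => exact stepDown_exp ih

theorem Ffin_gt (n : ℕ) : ∀ m, m < Ffin n m := by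
  induction n with
  | zero => intro m; exact Nat.lt_succ_self m
  | succ n ih =>
    intro m
    have iter : ∀ j y, y + j ≤ (Ffin n)^[j] y := by
      intro j
      induction j with
      | zero => intro y; simp
      | succ j ihj =>
        intro y
        rw [Function.iterate_succ_apply]
        calc y + (j+1) = (y+1) + j := by omega
        _ ≤ (Ffin n y) + j := by have := ih y; omega
        _ ≤ (Ffin n)^[j] (Ffin n y) := ihj _
    have := iter (m+1) m
    simp only [Ffin]
    omega

theorem omega_mul_ofNat (q : ℕ) : ONote.omega * ONote.ofNat (q+1) = oadd 1 q.succPNat 0 := by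
  show oadd 1 ((1 : ℕ+) * q.succPNat) 0 = oadd 1 q.succPNat 0
  rw [one_mul]

/-- Part 1 core: for m ≤ k and 2 ≤ k, ω·m steps down from ω^ω. -/
theorem part1 {k m : ℕ} (hm : m ≤ k) (hk : 2 ≤ k) :
    stepDown k (ONote.omega * ONote.ofNat m) (oadd ONote.omega 1 0) := by
  have h2w : stepDown k (ONote.ofNat 2) ONote.omega := by
    have hfs : fs ONote.omega k = oadd 0 k.succPNat 0 :=
      fs_of_inr (b := ONote.omega) (f := fun i => oadd 0 i.succPNat 0) (by rw [show ONote.omega = oadd 1 1 0 from rfl, fundamentalSequence]; rfl) k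
    have h1k : (1 : ℕ) ≤ k := by omega
    rcases stepDown_mult_le (k := k) (0 : ONote) h1k with h0 | hsd
    · subst h0
      exact TransGen.single ⟨oadd_ne_zero', hfs.symm⟩
    · exact hsd.step oadd_ne_zero' hfs.symm
  have hw2 : stepDown k (oadd (ONote.ofNat 2) 1 0) (oadd ONote.omega 1 0) := stepDown_exp h2w
  rcases m with _ | q
  · exact (stepDown_zero oadd_ne_zero').trans hw2
  · rw [omega_mul_ofNat q]
    have hfs2 : fs (oadd (ONote.ofNat 2) 1 0) k = oadd (ONote.ofNat 1) k.succPNat 0 :=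
      fs_of_inr (b := oadd (ONote.ofNat 2) 1 0) (f := fun i => oadd (ONote.ofNat 1) i.succPNat 0)
        (by rw [show ONote.ofNat 2 = oadd 0 (Nat.succPNat 1) 0 from rfl, fundamentalSequence]; rfl) k
    have hq : q ≤ k := by omega
    have step2 : stepDown k (oadd 1 q.succPNat 0) (oadd (ONote.ofNat 2) 1 0) := by
      rcases stepDown_mult_le (k := k) (1 : ONote) hq with rfl | hsd
      · exact TransGen.single ⟨oadd_ne_zero', hfs2.symm⟩
      · exact hsd.step oadd_ne_zero' hfs2.symm
    exact step2.trans hw2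

theorem wtower_fundSeq : ∀ x : ℕ, ∃ f : ℕ → ONote,
    fundamentalSequence (wtower (x+1)) = Sum.inr f := by
  intro x
  induction x with
  | zero =>
    exact ⟨fun i => oadd 0 i.succPNat 0,
      by rw [show wtower 1 = oadd 1 1 0 from rfl, fundamentalSequence]; rfl⟩
  | succ x ih =>
    obtain ⟨f, hf⟩ := ih
    exact ⟨fun i => oadd (f i) 1 0,
      by rw [show wtower (x+2) = oadd (wtower (x+1)) 1 0 from rfl, fundamentalSequence, hf]; rfl⟩

theorem tower_wtower : ∀ x : ℕ, tower x (oadd ONote.omega 1 0) = wtower (x+2) := by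
  intro x
  induction x with
  | zero => rfl
  | succ x ih => show oadd (tower x _) 1 0 = oadd (wtower (x+2)) 1 0; rw [ih]

theorem NF_wtower : ∀ x : ℕ, NF (wtower x) := by
  intro x
  induction x with
  | zero => exact ONote.nf_one
  | succ x ih => exact @ONote.NF.oadd_zero _ 1 ih

theorem NF_tower_core {a : ONote} (ha : NF a) : ∀ x, NF (tower x a) := by
  intro x
  induction x with
  | zero => exact ha
  | succ x ih => exact @ONote.NF.oadd_zero _ 1 ih

theorem NF_omega' : NF ONote.omega := @ONote.NF.oadd_zero 1 1 ONote.nf_one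

theorem NF_omul (m : ℕ) : NF (ONote.omega * ONote.ofNat m) :=
  @ONote.mul_nf _ _ NF_omega' (ONote.nf_ofNat m)

theorem tower_lt_wtower (m : ℕ) : ∀ y : ℕ,
    tower y (ONote.omega * ONote.ofNat m) < wtower (y+2) := by
  intro y
  induction y with
  | zero =>
    show ONote.omega * ONote.ofNat m < wtower 2
    rcases m with _ | q
    · exact ONote.oadd_pos _ _ _
    · rw [omega_mul_ofNat]
      refine ONote.oadd_lt_oadd_1 (@ONote.NF.oadd_zero _ q.succPNat ONote.nf_one) ?_
      rw [ONote.lt_def]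
      show ONote.repr (ONote.ofNat 1) < ONote.repr ONote.omega
      have : ONote.repr ONote.omega =
          Ordinal.omega0 ^ (ONote.repr (ONote.ofNat 1)) * ((1:ℕ+) : ℕ) + ONote.repr (0 : ONote) :=
        rfl
      rw [this, ONote.repr_ofNat]
      simpa using Ordinal.one_lt_omega0
  | succ y ih =>
    show oadd (tower y _) 1 0 < oadd (wtower (y+2)) 1 0
    exact ONote.oadd_lt_oadd_1
      (@ONote.NF.oadd_zero _ 1 (NF_tower_core (NF_omul m) y)) ih

theorem cmp_gt_of_lt {a b : ONote} (ha : NF a) (hb : NF b) (h : b < a) :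
    ONote.cmp a b = Ordering.gt := by
  have hc := @ONote.cmp_compares a b ha hb
  rcases hcc : ONote.cmp a b with _|_|_ <;> rw [hcc] at hc
  · exact absurd (lt_trans hc h) (lt_irrefl _)
  · exact absurd (hc ▸ h) (lt_irrefl _)

theorem oadd_one_add_eq {e b : ONote} (hb : NF b) (he : NF e)
    (hlt : b < oadd e 1 0) : oadd e 1 0 + b = oadd e 1 b := by
  cases b with
  | zero => rfl
  | oadd eb nb ab =>
    have hebe : eb < e := by
      rw [ONote.lt_def] at hlt ⊢
      have hle : Ordinal.omega0 ^ ONote.repr eb ≤ ONote.repr (oadd eb nb ab) :=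
        ONote.omega0_le_oadd eb nb ab
      have hwt : ONote.repr (oadd e 1 0) = Ordinal.omega0 ^ ONote.repr e := by
        show Ordinal.omega0 ^ ONote.repr e * ((1:ℕ+) : ℕ) + ONote.repr (0 : ONote) = _
        simp
      rw [hwt] at hlt
      by_contra hcon
      push_neg at hcon
      exact absurd (lt_of_le_of_lt
        (le_trans (Ordinal.opow_le_opow_right Ordinal.omega0_pos hcon) hle) hlt)
        (lt_irrefl _)
    have hgt : ONote.cmp e eb = Ordering.gt := cmp_gt_of_lt he hb.fst hebe
    show ONote.addAux e 1 (0 + oadd eb nb ab) = oadd e 1 (oadd eb nb ab)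
    rw [ONote.zero_add]
    unfold ONote.addAux
    dsimp only
    rw [hgt]

theorem stepDown_last {k : ℕ} {a b : ONote} (h : stepDown k a b) :
    ∃ c, (c = a ∨ stepDown k a c) ∧ b ≠ 0 ∧ c = fs b k := by
  obtain ⟨c, hac, hcb⟩ := (Relation.TransGen.tail'_iff).1 h
  refine ⟨c, ?_, hcb⟩
  rcases (Relation.reflTransGen_iff_eq_or_transGen).1 hac with h' | h'
  · exact Or.inl h'
  · exact Or.inr h'

end SlowCon

/-- if `m ≤ F_n(x+2) =: K` then `ω·m <_K ω^ω` and
`ω_{x+2} + ω_x^{ω·m} <_K ω_{x+2}·2`. -/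
theorem stmt10 : ∀ x n m : ℕ, m ≤ SlowCon.Ffin n (x + 2) →
    SlowCon.stepDown (SlowCon.Ffin n (x + 2)) (ONote.omega * ONote.ofNat m)
      (ONote.oadd ONote.omega 1 0) ∧
    SlowCon.stepDown (SlowCon.Ffin n (x + 2))
      (SlowCon.wtower (x + 2) + SlowCon.tower x (ONote.omega * ONote.ofNat m))
      (ONote.oadd (SlowCon.wtower (x + 1)) 2 0) := by
  intro x n m hm
  have hk2 : 2 ≤ SlowCon.Ffin n (x + 2) := by
    have := SlowCon.Ffin_gt n (x+2); omega
  have P1 := SlowCon.part1 hm hk2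
  refine ⟨P1, ?_⟩
  set K := SlowCon.Ffin n (x + 2) with hK
  have tw : SlowCon.stepDown K (SlowCon.tower x (ONote.omega * ONote.ofNat m))
      (SlowCon.wtower (x+2)) := by
    have h := SlowCon.stepDown_tower P1 x
    rwa [SlowCon.tower_wtower] at h
  obtain ⟨c, hc, hW, hceq⟩ := SlowCon.stepDown_last tw
  obtain ⟨f, hf⟩ := SlowCon.wtower_fundSeq x
  have hfsW : SlowCon.fs (SlowCon.wtower (x+2)) K = ONote.oadd (f K) 1 0 :=
    SlowCon.fs_of_inr (f := fun i => ONote.oadd (f i) 1 0)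
      (by rw [show SlowCon.wtower (x+2) = ONote.oadd (SlowCon.wtower (x+1)) 1 0 from rfl,
        ONote.fundamentalSequence, hf]; rfl) K
  have hfs2 : SlowCon.fs (ONote.oadd (SlowCon.wtower (x+1)) 2 0) K =
      ONote.oadd (SlowCon.wtower (x+1)) 1 (ONote.oadd (f K) 1 0) :=
    SlowCon.fs_of_inr (b := ONote.oadd (SlowCon.wtower (x+1)) 2 0)
      (f := fun i => ONote.oadd (SlowCon.wtower (x+1)) 1 (ONote.oadd (f i) 1 0))
      (by rw [ONote.fundamentalSequence, hf]; rfl) K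
  have hceq' : c = ONote.oadd (f K) 1 0 := by rw [hceq, hfsW]
  have hadd : SlowCon.wtower (x+2) + SlowCon.tower x (ONote.omega * ONote.ofNat m) =
      ONote.oadd (SlowCon.wtower (x+1)) 1 (SlowCon.tower x (ONote.omega * ONote.ofNat m)) :=
    SlowCon.oadd_one_add_eq (SlowCon.NF_tower_core (SlowCon.NF_omul m) x)
      (SlowCon.NF_wtower (x+1)) (SlowCon.tower_lt_wtower m x)
  rw [hadd]
  rcases hc with rfl | hsd
  · exact Relation.TransGen.single ⟨SlowCon.oadd_ne_zero', by rw [hfs2, ← hceq']⟩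
  · exact (SlowCon.stepDown_oadd hsd (SlowCon.wtower (x+1)) 1).step
      SlowCon.oadd_ne_zero' (by rw [hfs2, ← hceq'])
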